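/- For all integers k ≥ 0 and 0 ≤ m ≤ k and all complex parameters z₁, z₂ ∈ ℂ, the directional derivatives of F_k^m along the vector fields e₂ and e₃ satisfy, identically on ℝ⁴: ∇_{e₂} F_k^m = m·F_k^{m-1} - (k-m)·F_k^{m+1} and ∇_{e₃} F_k^m = i m·F_k^{m-1} + i(k-m)·F_k^{m+1}, with the convention that F_k^{-1} = 0 and F_k^{k+1} = 0. -/

import Mathlib

/-- The polynomial `F_k^m(x,y,z,w) = (αz₁+βz₂)^m (-conj(β)z₁+conj(α)z₂)^{k-m}` where
`α = x+iy`, `β = z+iw`, with the convention that `F_k^m = 0` unless `0 ≤ m ≤ k`. -/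
noncomputable def Fkm (k : ℕ) (m : ℤ) (z₁ z₂ : ℂ) (p : Fin 4 → ℝ) : ℂ :=
  if 0 ≤ m ∧ m ≤ (k : ℤ) then
    (((p 0 : ℂ) + (p 1 : ℂ) * Complex.I) * z₁ +
        ((p 2 : ℂ) + (p 3 : ℂ) * Complex.I) * z₂) ^ m.toNat *
      ((-(starRingEnd ℂ) ((p 2 : ℂ) + (p 3 : ℂ) * Complex.I)) * z₁ +
        (starRingEnd ℂ) ((p 0 : ℂ) + (p 1 : ℂ) * Complex.I) * z₂) ^ (k - m.toNat)
  else 0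

/-- The vector field `e₂(x,y,z,w) = (-z, w, x, -y)` on `ℝ⁴`. -/
def fieldE2 (p : Fin 4 → ℝ) : Fin 4 → ℝ := ![-p 2, p 3, p 0, -p 1]

/-- The vector field `e₃(x,y,z,w) = (-w, -z, y, x)` on `ℝ⁴`. -/
def fieldE3 (p : Fin 4 → ℝ) : Fin 4 → ℝ := ![-p 3, -p 2, p 1, p 0]

noncomputable def coordC (i : Fin 4) : (Fin 4 → ℝ) →L[ℝ] ℂ :=
  Complex.ofRealCLM.comp (ContinuousLinearMap.proj i)

noncomputable def mapA (z₁ z₂ : ℂ) : (Fin 4 → ℝ) →L[ℝ] ℂ :=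
  z₁ • coordC 0 + (z₁ * Complex.I) • coordC 1 + z₂ • coordC 2 + (z₂ * Complex.I) • coordC 3

noncomputable def mapB (z₁ z₂ : ℂ) : (Fin 4 → ℝ) →L[ℝ] ℂ :=
  (-z₁) • coordC 2 + (z₁ * Complex.I) • coordC 3 + z₂ • coordC 0 + (-(z₂ * Complex.I)) • coordC 1

lemma mapA_apply (z₁ z₂ : ℂ) (p : Fin 4 → ℝ) :
    mapA z₁ z₂ p = ((p 0 : ℂ) + (p 1 : ℂ) * Complex.I) * z₁ +
      ((p 2 : ℂ) + (p 3 : ℂ) * Complex.I) * z₂ := by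
  simp only [mapA, coordC, ContinuousLinearMap.add_apply, ContinuousLinearMap.smul_apply,
    ContinuousLinearMap.coe_comp', Function.comp_apply, ContinuousLinearMap.proj_apply,
    Complex.ofRealCLM_apply, smul_eq_mul]
  ring

lemma mapB_apply (z₁ z₂ : ℂ) (p : Fin 4 → ℝ) :
    mapB z₁ z₂ p = (-(starRingEnd ℂ) ((p 2 : ℂ) + (p 3 : ℂ) * Complex.I)) * z₁ +
      (starRingEnd ℂ) ((p 0 : ℂ) + (p 1 : ℂ) * Complex.I) * z₂ := by
  simp [mapB, coordC, map_add, map_mul, Complex.conj_ofReal, Complex.conj_I]; ring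

lemma Fkm_eq (k n : ℕ) (hmk : n ≤ k) (z₁ z₂ : ℂ) :
    Fkm k (n : ℤ) z₁ z₂ = fun p => (mapA z₁ z₂ p) ^ n * (mapB z₁ z₂ p) ^ (k - n) := by
  funext p
  rw [Fkm, if_pos ⟨Int.ofNat_nonneg n, by exact_mod_cast hmk⟩, mapA_apply, mapB_apply,
    Int.toNat_natCast]

lemma mapA_E2 (z₁ z₂ : ℂ) (p : Fin 4 → ℝ) :
    mapA z₁ z₂ (fieldE2 p) = mapB z₁ z₂ p := by
  simp only [mapA, mapB, coordC, fieldE2, ContinuousLinearMap.add_apply,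
    ContinuousLinearMap.smul_apply, ContinuousLinearMap.coe_comp', Function.comp_apply,
    ContinuousLinearMap.proj_apply, Complex.ofRealCLM_apply, smul_eq_mul,
    Matrix.cons_val_zero, Matrix.cons_val_one, Matrix.head_cons, Matrix.cons_val_two,
    Matrix.tail_cons, Matrix.cons_val_three, Complex.ofReal_neg]
  linear_combination (0 : ℂ) * Complex.I_sq

lemma mapB_E2 (z₁ z₂ : ℂ) (p : Fin 4 → ℝ) :
    mapB z₁ z₂ (fieldE2 p) = -(mapA z₁ z₂ p) := by
  simp only [mapA, mapB, coordC, fieldE2, ContinuousLinearMap.add_apply,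
    ContinuousLinearMap.smul_apply, ContinuousLinearMap.coe_comp', Function.comp_apply,
    ContinuousLinearMap.proj_apply, Complex.ofRealCLM_apply, smul_eq_mul,
    Matrix.cons_val_zero, Matrix.cons_val_one, Matrix.head_cons, Matrix.cons_val_two,
    Matrix.tail_cons, Matrix.cons_val_three, Complex.ofReal_neg]
  linear_combination (0 : ℂ) * Complex.I_sq

lemma mapA_E3 (z₁ z₂ : ℂ) (p : Fin 4 → ℝ) :
    mapA z₁ z₂ (fieldE3 p) = Complex.I * mapB z₁ z₂ p := by
  simp only [mapA, mapB, coordC, fieldE3, ContinuousLinearMap.add_apply,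
    ContinuousLinearMap.smul_apply, ContinuousLinearMap.coe_comp', Function.comp_apply,
    ContinuousLinearMap.proj_apply, Complex.ofRealCLM_apply, smul_eq_mul,
    Matrix.cons_val_zero, Matrix.cons_val_one, Matrix.head_cons, Matrix.cons_val_two,
    Matrix.tail_cons, Matrix.cons_val_three, Complex.ofReal_neg]
  linear_combination (-(z₁ * (p 3 : ℂ)) + z₂ * (p 1 : ℂ)) * Complex.I_sq

lemma mapB_E3 (z₁ z₂ : ℂ) (p : Fin 4 → ℝ) :
    mapB z₁ z₂ (fieldE3 p) = Complex.I * mapA z₁ z₂ p := by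
  simp only [mapA, mapB, coordC, fieldE3, ContinuousLinearMap.add_apply,
    ContinuousLinearMap.smul_apply, ContinuousLinearMap.coe_comp', Function.comp_apply,
    ContinuousLinearMap.proj_apply, Complex.ofRealCLM_apply, smul_eq_mul,
    Matrix.cons_val_zero, Matrix.cons_val_one, Matrix.head_cons, Matrix.cons_val_two,
    Matrix.tail_cons, Matrix.cons_val_three, Complex.ofReal_neg]
  linear_combination (-(z₁ * (p 1 : ℂ)) - z₂ * (p 3 : ℂ)) * Complex.I_sq

lemma fderiv_Fkm (k n : ℕ) (hmk : n ≤ k) (z₁ z₂ : ℂ) (p v : Fin 4 → ℝ) :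
    fderiv ℝ (Fkm k (n : ℤ) z₁ z₂) p v
      = (mapA z₁ z₂ p) ^ n * (((k : ℂ) - n) * (mapB z₁ z₂ p) ^ (k - n - 1) * mapB z₁ z₂ v)
        + (mapB z₁ z₂ p) ^ (k - n) * ((n : ℂ) * (mapA z₁ z₂ p) ^ (n - 1) * mapA z₁ z₂ v) := by
  rw [Fkm_eq k n hmk]
  have hA : HasFDerivAt (fun p => mapA z₁ z₂ p) (mapA z₁ z₂) p :=
    (mapA z₁ z₂).hasFDerivAt
  have hB : HasFDerivAt (fun p => mapB z₁ z₂ p) (mapB z₁ z₂) p :=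
    (mapB z₁ z₂).hasFDerivAt
  have hAn : HasFDerivAt (fun q => mapA z₁ z₂ q ^ n)
      (((n : ℂ) * mapA z₁ z₂ p ^ (n - 1)) • mapA z₁ z₂) p :=
    (hasDerivAt_pow n (mapA z₁ z₂ p)).comp_hasFDerivAt p hA
  have hBn : HasFDerivAt (fun q => mapB z₁ z₂ q ^ (k - n))
      ((((k - n : ℕ) : ℂ) * mapB z₁ z₂ p ^ (k - n - 1)) • mapB z₁ z₂) p :=
    (hasDerivAt_pow (k - n) (mapB z₁ z₂ p)).comp_hasFDerivAt p hB
  have h : HasFDerivAt (fun q => mapA z₁ z₂ q ^ n * mapB z₁ z₂ q ^ (k - n)) _ p := hAn.mul hBn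
  rw [h.fderiv]
  simp only [ContinuousLinearMap.add_apply, ContinuousLinearMap.smul_apply, smul_eq_mul]
  have : ((k - n : ℕ) : ℂ) = (k : ℂ) - n := by push_cast [hmk]; ring
  rw [this]
  try ring

lemma alg_key (k n : ℕ) (A B Flow Fhigh c₁ c₂ : ℂ)
    (hlow : (n : ℂ) * Flow = (n : ℂ) * (A ^ (n - 1) * B ^ (k - n + 1)))
    (hhigh : ((k : ℂ) - n) * Fhigh = ((k : ℂ) - n) * (A ^ (n + 1) * B ^ (k - n - 1))) :
    A ^ n * (((k : ℂ) - n) * B ^ (k - n - 1) * (c₁ * A))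
      + B ^ (k - n) * ((n : ℂ) * A ^ (n - 1) * (c₂ * B))
    = c₂ * (n : ℂ) * Flow + c₁ * ((k : ℂ) - n) * Fhigh := by
  calc A ^ n * (((k : ℂ) - n) * B ^ (k - n - 1) * (c₁ * A))
      + B ^ (k - n) * ((n : ℂ) * A ^ (n - 1) * (c₂ * B))
      = c₂ * ((n : ℂ) * (A ^ (n - 1) * B ^ (k - n + 1)))
        + c₁ * (((k : ℂ) - n) * (A ^ (n + 1) * B ^ (k - n - 1))) := by
        rw [pow_succ A n, pow_succ B (k - n)]; ring
    _ = c₂ * ((n : ℂ) * Flow) + c₁ * (((k : ℂ) - n) * Fhigh) := by rw [hlow, hhigh]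
    _ = c₂ * (n : ℂ) * Flow + c₁ * ((k : ℂ) - n) * Fhigh := by ring

/-- the raising/lowering relations
`∇_{e₂} F_k^m = m·F_k^{m-1} - (k-m)·F_k^{m+1}` and
`∇_{e₃} F_k^m = im·F_k^{m-1} + i(k-m)·F_k^{m+1}`
(with the convention `F_k^{-1} = F_k^{k+1} = 0`, built into `Fkm`). -/
theorem stmt_10 (k : ℕ) (m : ℤ) (hm0 : 0 ≤ m) (hmk : m ≤ (k : ℤ)) (z₁ z₂ : ℂ)
    (p : Fin 4 → ℝ) :
    fderiv ℝ (Fkm k m z₁ z₂) p (fieldE2 p)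
        = (m : ℂ) * Fkm k (m - 1) z₁ z₂ p
          - ((k : ℂ) - (m : ℂ)) * Fkm k (m + 1) z₁ z₂ p ∧
    fderiv ℝ (Fkm k m z₁ z₂) p (fieldE3 p)
        = Complex.I * (m : ℂ) * Fkm k (m - 1) z₁ z₂ p
          + Complex.I * ((k : ℂ) - (m : ℂ)) * Fkm k (m + 1) z₁ z₂ p := by
  lift m to ℕ using hm0 with n
  have hnk : n ≤ k := by exact_mod_cast hmk
  set A := mapA z₁ z₂ p with hA
  set B := mapB z₁ z₂ p with hB
  -- values of the shifted Fkm
  have hlow : (n : ℂ) * Fkm k ((n : ℤ) - 1) z₁ z₂ p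
      = (n : ℂ) * (A ^ (n - 1) * B ^ (k - n + 1)) := by
    rcases Nat.eq_zero_or_pos n with h0 | h0
    · subst h0
      simp [Fkm]
    · have : ((n : ℤ) - 1) = ((n - 1 : ℕ) : ℤ) := by omega
      rw [this, Fkm_eq k (n - 1) (by omega)]
      have : k - (n - 1) = k - n + 1 := by omega
      rw [this]
  have hhigh : ((k : ℂ) - n) * Fkm k ((n : ℤ) + 1) z₁ z₂ p
      = ((k : ℂ) - n) * (A ^ (n + 1) * B ^ (k - n - 1)) := by
    rcases eq_or_lt_of_le hnk with h0 | h0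
    · subst h0
      have : ((n : ℂ) - n) = 0 := by ring
      simp
    · have : ((n : ℤ) + 1) = ((n + 1 : ℕ) : ℤ) := by omega
      rw [this, Fkm_eq k (n + 1) (by omega)]
      have : k - (n + 1) = k - n - 1 := by omega
      rw [this]
  have key2 := fderiv_Fkm k n hnk z₁ z₂ p (fieldE2 p)
  have key3 := fderiv_Fkm k n hnk z₁ z₂ p (fieldE3 p)
  rw [mapA_E2, mapB_E2] at key2
  rw [mapA_E3, mapB_E3] at key3
  rw [← hA, ← hB] at key2 key3
  have hcast : ((n : ℤ) : ℂ) = (n : ℂ) := by push_cast; ring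
  constructor
  · rw [key2, hcast]
    have := alg_key k n A B (Fkm k ((n : ℤ) - 1) z₁ z₂ p) (Fkm k ((n : ℤ) + 1) z₁ z₂ p)
      (-1) 1 hlow hhigh
    linear_combination this
  · rw [key3, hcast]
    have := alg_key k n A B (Fkm k ((n : ℤ) - 1) z₁ z₂ p) (Fkm k ((n : ℤ) + 1) z₁ z₂ p)
      Complex.I Complex.I hlow hhigh
    linear_combination this
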